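/- arXiv:1703.08937 — 2 statements merged into one kernel-verified Lean document; each statement's English description precedes it below -/
import Mathlib

section
/- For a random variable X with mean μ, variance σ² > 0, and kurtosis κ = E[(X-μ)⁴]/σ⁴ < ∞, the skewness γ = E[(X-μ)³]/σ³ satisfies γ ≤ √(κ - 1). -/
open MeasureTheory
open scoped ENNReal

lemma aux_int_pow {Ω : Type*} [MeasurableSpace Ω] (P : Measure Ω) [IsProbabilityMeasure P]
    (Y : Ω → ℝ) (hY : MemLp Y 4 P) (k : ℕ) (hk : k ≤ 4) (hk0 : k ≠ 0) :
    Integrable (fun ω => Y ω ^ k) P := by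
  have hmem : MemLp Y (k : ℝ≥0∞) P :=
    hY.mono_exponent (by exact_mod_cast Nat.cast_le.mpr hk)
  have h := hmem.integrable_norm_rpow (by exact_mod_cast hk0) (by simp)
  refine h.mono' (hY.1.pow k) ?_
  filter_upwards with ω
  rw [Real.norm_eq_abs, Real.norm_eq_abs, abs_pow, ← Real.rpow_natCast |Y ω| k]
  simp

/-- Skewness is bounded by `√(κ - 1)` where `κ` is the kurtosis. -/
theorem skewness_le_sqrt_kurtosis_sub_one
    {Ω : Type*} [MeasurableSpace Ω] (P : Measure Ω) [IsProbabilityMeasure P]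
    (X : Ω → ℝ) (hX : MemLp X 4 P)
    (m σ2 γ κ : ℝ)
    (hm : m = ∫ ω, X ω ∂P)
    (hσ2 : σ2 = ∫ ω, (X ω - m) ^ 2 ∂P)
    (hσ2pos : 0 < σ2)
    (hγ : γ = (∫ ω, (X ω - m) ^ 3 ∂P) / Real.sqrt σ2 ^ 3)
    (hκ : κ = (∫ ω, (X ω - m) ^ 4 ∂P) / σ2 ^ 2) :
    γ ≤ Real.sqrt (κ - 1) := by
  have hY4 : MemLp (fun ω => X ω - m) 4 P := hX.sub (memLp_const m)
  have iY : ∀ k : ℕ, k ≤ 4 → k ≠ 0 → Integrable (fun ω => (X ω - m) ^ k) P :=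
    fun k hk h0 => aux_int_pow P _ hY4 k hk h0
  have i4 := iY 4 (by norm_num) (by norm_num)
  have i3 := iY 3 (by norm_num) (by norm_num)
  have i2 := iY 2 (by norm_num) (by norm_num)
  have i1 : Integrable (fun ω => X ω - m) P := by
    have := iY 1 (by norm_num) (by norm_num); simpa using this
  have hXint : Integrable X P := hX.integrable (by norm_num)
  have hEY : ∫ ω, (X ω - m) ∂P = 0 := by
    rw [integral_sub hXint (integrable_const m)]
    simp [hm]
  set a : ℝ := ∫ ω, (X ω - m) ^ 3 ∂P with ha
  set c : ℝ := a / σ2 with hc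
  set I4 : ℝ := ∫ ω, (X ω - m) ^ 4 ∂P with hI4
  have hca : c * σ2 = a := div_mul_cancel₀ a hσ2pos.ne'
  have key : (0:ℝ) ≤ ∫ ω, ((X ω - m) ^ 2 - σ2 - c * (X ω - m)) ^ 2 ∂P :=
    integral_nonneg fun ω => sq_nonneg _
  have e1 : Integrable (fun ω => (-2*c) * (X ω - m)^3) P := i3.const_mul _
  have e2 : Integrable (fun ω => (c^2 - 2*σ2) * (X ω - m)^2) P := i2.const_mul _
  have e3 : Integrable (fun ω => (2*c*σ2) * (X ω - m)) P := i1.const_mul _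
  have A1 : Integrable (fun ω => (X ω - m)^4 + (-2*c) * (X ω - m)^3) P := i4.add e1
  have A2 : Integrable (fun ω => (X ω - m)^4 + (-2*c) * (X ω - m)^3
      + (c^2 - 2*σ2) * (X ω - m)^2) P := A1.add e2
  have A3 : Integrable (fun ω => (X ω - m)^4 + (-2*c) * (X ω - m)^3
      + (c^2 - 2*σ2) * (X ω - m)^2 + (2*c*σ2) * (X ω - m)) P := A2.add e3
  have hIeq : ∫ ω, ((X ω - m) ^ 2 - σ2 - c * (X ω - m)) ^ 2 ∂P
      = I4 + (-2*c) * a + (c^2 - 2*σ2) * σ2 + σ2^2 := by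
    calc ∫ ω, ((X ω - m) ^ 2 - σ2 - c * (X ω - m)) ^ 2 ∂P
        = ∫ ω, ((X ω - m)^4 + (-2*c) * (X ω - m)^3 + (c^2 - 2*σ2) * (X ω - m)^2
            + (2*c*σ2) * (X ω - m) + σ2^2) ∂P := by
          congr 1; funext ω; ring
      _ = I4 + (-2*c) * a + (c^2 - 2*σ2) * σ2 + σ2^2 := by
          rw [integral_add A3 (integrable_const _),
            integral_add A2 e3,
            integral_add A1 e2,
            integral_add i4 e1,
            integral_const_mul, integral_const_mul, integral_const_mul,
            integral_const, hEY]
          simp [← hσ2]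
          rfl
  rw [hIeq] at key
  have h3pos : (0:ℝ) < σ2^3 := by positivity
  have h2pos : (0:ℝ) < σ2^2 := by positivity
  have hca2 : c * a = c^2 * σ2 := by rw [← hca]; ring
  have hkey2 : c^2*σ2 + σ2^2 ≤ I4 := by nlinarith [key, hca2]
  have hb : a^2 + σ2^3 ≤ I4 * σ2 := by
    have ha2 : a^2 = c^2 * σ2^2 := by rw [← hca]; ring
    nlinarith [mul_le_mul_of_nonneg_right hkey2 hσ2pos.le, ha2]
  have hγsq : γ^2 = a^2 / σ2^3 := by
    rw [hγ, div_pow]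
    congr 1
    rw [show (Real.sqrt σ2 ^ 3)^2 = (Real.sqrt σ2 ^ 2)^3 by ring,
      Real.sq_sqrt hσ2pos.le]
  have hfin : γ^2 ≤ κ - 1 := by
    rw [hκ, hγsq]
    rw [div_sub_one h2pos.ne', div_le_div_iff₀ h3pos h2pos]
    nlinarith [mul_le_mul_of_nonneg_right hb h2pos.le]
  calc γ ≤ |γ| := le_abs_self γ
    _ = Real.sqrt (γ^2) := (Real.sqrt_sq_eq_abs γ).symm
    _ ≤ Real.sqrt (κ-1) := Real.sqrt_le_sqrt hfin
end

section
/- If Z = X + Y where X, Y are independent, Var[X] = 1, Kurt[X] = κ ≤ κ₀ with κ₀ ≥ 7/2, and Y = (Δ/p)B with B ~ Bernoulli(p) and p = min{Δ, 1/κ₀}, then Kurt[Z] ≤ κ₀. -/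
open MeasureTheory

private lemma kurt_aux1 (κ κ₀ Δ : ℝ) (hκ₀ : 7 / 2 ≤ κ₀) (hΔ : 0 < Δ)
    (hΔκ : Δ * κ₀ ≤ 1) (hκκ₀ : κ ≤ κ₀) :
    κ + 6 * 1 ^ 2 * Δ * (1 - Δ) + 1 ^ 4 * (Δ * (1 - Δ) ^ 4 + Δ ^ 4 * (1 - Δ))
      ≤ κ₀ * (1 + 1 ^ 2 * Δ * (1 - Δ)) ^ 2 := by
  have hΔ1 : Δ ≤ 2 / 7 := by nlinarith
  have ht : 0 ≤ Δ * (1 - Δ) := by nlinarith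
  nlinarith [mul_nonneg ht (by linarith : (0:ℝ) ≤ 2 * κ₀ - 7),
    sq_nonneg (Δ * (1 - Δ)), mul_nonneg (sq_nonneg (Δ * (1 - Δ))) (by linarith : (0:ℝ) ≤ κ₀)]

private lemma kurt_aux2 (κ κ₀ Δ : ℝ) (hκ₀ : 7 / 2 ≤ κ₀) (hκκ₀ : κ ≤ κ₀) :
    κ + 6 * (Δ ^ 2 * (κ₀ - 1)) + Δ ^ 4 * (κ₀ - 1) * (κ₀ ^ 2 - 3 * κ₀ + 3)
      ≤ κ₀ * (1 + Δ ^ 2 * (κ₀ - 1)) ^ 2 := by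
  have h1 : (0:ℝ) ≤ Δ ^ 2 * (κ₀ - 1) := by nlinarith [sq_nonneg Δ]
  have h2 : (0:ℝ) ≤ Δ ^ 4 := by positivity
  nlinarith [mul_nonneg (mul_nonneg h2 (by linarith : (0:ℝ) ≤ κ₀ - 1))
      (by linarith : (0:ℝ) ≤ 2 * κ₀ - 3),
    mul_nonneg h1 (by linarith : (0:ℝ) ≤ 2 * κ₀ - 6)]

/-- The Bernoulli perturbation keeps the kurtosis below `κ₀` when `κ₀ ≥ 7/2`
and `p = min{Δ, 1/κ₀}`. -/
theorem kurtosis_bernoulli_perturbation_le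
    {Ω : Type*} [MeasurableSpace Ω] (P : Measure Ω) [IsProbabilityMeasure P]
    (X B : Ω → ℝ) (hX : MemLp X 4 P) (hB : Measurable B)
    (hindep : ProbabilityTheory.IndepFun X B P)
    (κ κ₀ Δ p : ℝ) (hκ₀ : 7 / 2 ≤ κ₀) (hΔ : 0 < Δ)
    (hp : p = min Δ (1 / κ₀))
    (hBlaw : Measure.map B P
      = ENNReal.ofReal p • Measure.dirac (1 : ℝ)
        + ENNReal.ofReal (1 - p) • Measure.dirac (0 : ℝ))
    (hmean : ∫ ω, X ω ∂P = 0) (hvar : ∫ ω, (X ω) ^ 2 ∂P = 1)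
    (hkurt : ∫ ω, (X ω) ^ 4 ∂P = κ) (hκκ₀ : κ ≤ κ₀)
    (Z : Ω → ℝ) (hZ : Z = fun ω => X ω + (Δ / p) * B ω) :
    (∫ ω, (Z ω - ∫ ω', Z ω' ∂P) ^ 4 ∂P) /
        (∫ ω, (Z ω - ∫ ω', Z ω' ∂P) ^ 2 ∂P) ^ 2 ≤ κ₀ := by
  have hκ₀pos : (0:ℝ) < κ₀ := by linarith
  have hppos : 0 < p := by
    rw [hp]; exact lt_min hΔ (by positivity)
  have hpκ : p ≤ 1 / κ₀ := by rw [hp]; exact min_le_right _ _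
  have hp1 : p ≤ 1 := by
    have : (1:ℝ) / κ₀ ≤ 1 := by
      rw [div_le_one hκ₀pos]; linarith
    linarith
  set c : ℝ := Δ / p with hc
  have hcp : c * p = Δ := div_mul_cancel₀ _ hppos.ne'
  have hAX := hX.aestronglyMeasurable
  -- B ∈ {0,1} a.e.
  have hB01 : ∀ᵐ ω ∂P, B ω = 0 ∨ B ω = 1 := by
    have hs : MeasurableSet ({0, 1}ᶜ : Set ℝ) := (by measurability)
    have h0 : P (B ⁻¹' {0, 1}ᶜ) = 0 := by
      rw [← Measure.map_apply hB hs, hBlaw]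
      simp
    have hseteq : {ω | ¬(B ω = 0 ∨ B ω = 1)} = B ⁻¹' {0, 1}ᶜ := by
      ext ω; simp [not_or]
    rw [ae_iff, hseteq]; exact h0
  -- E[B] = p
  have hEB : ∫ ω, B ω ∂P = p := by
    have hset : MeasurableSet (B ⁻¹' {1}) := hB (measurableSet_singleton 1)
    have hcong : B =ᵐ[P] Set.indicator (B ⁻¹' {1}) (fun _ => (1:ℝ)) := by
      filter_upwards [hB01] with ω h
      rcases h with h | h <;> simp [Set.indicator, h]
    rw [integral_congr_ae hcong, integral_indicator_const _ hset, measureReal_def,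
      ← Measure.map_apply hB (measurableSet_singleton 1), hBlaw]
    simp [ENNReal.toReal_ofReal hppos.le]
  -- integrability of powers of X
  have habs4 : ∀ x : ℝ, |x| ^ 4 = x ^ 4 := fun x => by
    rw [← abs_pow, abs_of_nonneg (by positivity)]
  have hX4i : Integrable (fun ω => X ω ^ 4) P := by
    have h := hX.integrable_norm_rpow (by norm_num) (by norm_num)
    simp only [ENNReal.toReal_ofNat, Real.norm_eq_abs] at h
    have : (fun ω => |X ω| ^ (4:ℝ)) = fun ω => X ω ^ 4 := by
      funext ω
      rw [show (4:ℝ) = ((4:ℕ):ℝ) by norm_num, Real.rpow_natCast, habs4]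
    rwa [this] at h
  have hXi : ∀ i : ℕ, i ≤ 4 → Integrable (fun ω => X ω ^ i) P := by
    intro i hi
    refine ((integrable_const (1:ℝ)).add hX4i).mono' (hAX.pow _)
      (Filter.Eventually.of_forall fun ω => ?_)
    simp only [Pi.add_apply]
    rw [Real.norm_eq_abs, abs_pow]
    rcases le_total (|X ω|) 1 with h | h
    · have h1 : |X ω| ^ i ≤ 1 := pow_le_one₀ (abs_nonneg _) h
      nlinarith [sq_nonneg (X ω ^ 2)]
    · have h1 : |X ω| ^ i ≤ |X ω| ^ 4 := pow_le_pow_right₀ h hi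
      rw [habs4] at h1; linarith
  have hXiB : ∀ i : ℕ, i ≤ 4 → Integrable (fun ω => X ω ^ i * B ω) P := by
    intro i hi
    refine ((hXi i hi).abs).mono' ((hAX.pow _).mul hB.aestronglyMeasurable) ?_
    filter_upwards [hB01] with ω h
    rcases h with h | h <;> simp [h, abs_nonneg]
  have iB : Integrable B P := by simpa using hXiB 0 (by norm_num)
  have i1 := hXi 1 (by norm_num)
  have i2 := hXi 2 (by norm_num)
  have i3 := hXi 3 (by norm_num)
  have i4 := hXi 4 (by norm_num)
  -- independence consequences
  have hmul : ∀ i : ℕ, ∫ ω, X ω ^ i * B ω ∂P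
      = (∫ ω, X ω ^ i ∂P) * ∫ ω, B ω ∂P := by
    intro i
    exact (hindep.comp (measurable_id.pow_const i) measurable_id).integral_mul_eq_mul_integral
      (hAX.pow _) hB.aestronglyMeasurable
  have hX1 : ∫ ω, X ω ^ 1 ∂P = 0 := by simpa using hmean
  -- mean of Z
  have iX : Integrable X P := by simpa using i1
  have hEZ : ∫ ω', Z ω' ∂P = Δ := by
    rw [hZ]
    rw [integral_add iX (iB.const_mul _), integral_const_mul, hmean, hEB]
    simp [hcp, hc, hppos.ne']
  -- pointwise form of the centered variable
  have hZc : ∀ ω, Z ω - Δ = X ω + c * (B ω - p) := by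
    intro ω; rw [hZ]; simp only; rw [← hcp]; ring
  -- second moment
  have hI2 : ∫ ω, (Z ω - Δ) ^ 2 ∂P = 1 + c ^ 2 * p * (1 - p) := by
    have e2 : (fun ω => (Z ω - Δ) ^ 2) =ᵐ[P]
        fun ω => X ω ^ 2 + (2 * c) * (X ω ^ 1 * B ω) + (-(2 * c * p)) * X ω ^ 1
          + (c ^ 2 * (1 - 2 * p)) * B ω + c ^ 2 * p ^ 2 := by
      filter_upwards [hB01] with ω h
      rw [hZc ω]
      rcases h with h | h <;> rw [h] <;> ring
    have A1 : Integrable (fun ω => X ω ^ 2 + (2 * c) * (X ω ^ 1 * B ω)) P :=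
      i2.add ((hXiB 1 (by norm_num)).const_mul _)
    have A2 : Integrable (fun ω => X ω ^ 2 + (2 * c) * (X ω ^ 1 * B ω)
        + (-(2 * c * p)) * X ω ^ 1) P := A1.add (i1.const_mul (-(2 * c * p)))
    have A3 : Integrable (fun ω => X ω ^ 2 + (2 * c) * (X ω ^ 1 * B ω)
        + (-(2 * c * p)) * X ω ^ 1 + (c ^ 2 * (1 - 2 * p)) * B ω) P :=
      A2.add (iB.const_mul (c ^ 2 * (1 - 2 * p)))
    rw [integral_congr_ae e2, integral_add A3 (integrable_const _),
      integral_add A2 (iB.const_mul _), integral_add A1 (i1.const_mul _),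
      integral_add i2 ((hXiB 1 (by norm_num)).const_mul _),
      integral_const_mul, integral_const_mul, integral_const_mul, integral_const,
      hvar, hX1, hEB, hmul 1, hX1]
    simp only [measure_univ, probReal_univ, ENNReal.toReal_one, smul_eq_mul, one_mul]
    ring
  -- fourth moment
  have hI4 : ∫ ω, (Z ω - Δ) ^ 4 ∂P
      = κ + 6 * c ^ 2 * p * (1 - p)
        + c ^ 4 * (p * (1 - p) ^ 4 + p ^ 4 * (1 - p)) := by
    have e4 : (fun ω => (Z ω - Δ) ^ 4) =ᵐ[P]
        fun ω => X ω ^ 4 + (4 * c) * (X ω ^ 3 * B ω) + (-(4 * c * p)) * X ω ^ 3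
          + (6 * c ^ 2 * (1 - 2 * p)) * (X ω ^ 2 * B ω) + (6 * c ^ 2 * p ^ 2) * X ω ^ 2
          + (4 * c ^ 3 * ((1 - p) ^ 3 + p ^ 3)) * (X ω ^ 1 * B ω)
          + (-(4 * c ^ 3 * p ^ 3)) * X ω ^ 1
          + (c ^ 4 * ((1 - p) ^ 4 - p ^ 4)) * B ω + c ^ 4 * p ^ 4 := by
      filter_upwards [hB01] with ω h
      rw [hZc ω]
      rcases h with h | h <;> rw [h] <;> ring
    have A1 : Integrable (fun ω => X ω ^ 4 + (4 * c) * (X ω ^ 3 * B ω)) P :=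
      i4.add ((hXiB 3 (by norm_num)).const_mul _)
    have A2 : Integrable (fun ω => X ω ^ 4 + (4 * c) * (X ω ^ 3 * B ω)
        + (-(4 * c * p)) * X ω ^ 3) P := A1.add (i3.const_mul (-(4 * c * p)))
    have A3 : Integrable (fun ω => X ω ^ 4 + (4 * c) * (X ω ^ 3 * B ω)
        + (-(4 * c * p)) * X ω ^ 3
        + (6 * c ^ 2 * (1 - 2 * p)) * (X ω ^ 2 * B ω)) P :=
      A2.add ((hXiB 2 (by norm_num)).const_mul (6 * c ^ 2 * (1 - 2 * p)))
    have A4 : Integrable (fun ω => X ω ^ 4 + (4 * c) * (X ω ^ 3 * B ω)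
        + (-(4 * c * p)) * X ω ^ 3
        + (6 * c ^ 2 * (1 - 2 * p)) * (X ω ^ 2 * B ω)
        + (6 * c ^ 2 * p ^ 2) * X ω ^ 2) P :=
      A3.add (i2.const_mul (6 * c ^ 2 * p ^ 2))
    have A5 : Integrable (fun ω => X ω ^ 4 + (4 * c) * (X ω ^ 3 * B ω)
        + (-(4 * c * p)) * X ω ^ 3
        + (6 * c ^ 2 * (1 - 2 * p)) * (X ω ^ 2 * B ω)
        + (6 * c ^ 2 * p ^ 2) * X ω ^ 2
        + (4 * c ^ 3 * ((1 - p) ^ 3 + p ^ 3)) * (X ω ^ 1 * B ω)) P :=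
      A4.add ((hXiB 1 (by norm_num)).const_mul (4 * c ^ 3 * ((1 - p) ^ 3 + p ^ 3)))
    have A6 : Integrable (fun ω => X ω ^ 4 + (4 * c) * (X ω ^ 3 * B ω)
        + (-(4 * c * p)) * X ω ^ 3
        + (6 * c ^ 2 * (1 - 2 * p)) * (X ω ^ 2 * B ω)
        + (6 * c ^ 2 * p ^ 2) * X ω ^ 2
        + (4 * c ^ 3 * ((1 - p) ^ 3 + p ^ 3)) * (X ω ^ 1 * B ω)
        + (-(4 * c ^ 3 * p ^ 3)) * X ω ^ 1) P :=
      A5.add (i1.const_mul (-(4 * c ^ 3 * p ^ 3)))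
    have A7 : Integrable (fun ω => X ω ^ 4 + (4 * c) * (X ω ^ 3 * B ω)
        + (-(4 * c * p)) * X ω ^ 3
        + (6 * c ^ 2 * (1 - 2 * p)) * (X ω ^ 2 * B ω)
        + (6 * c ^ 2 * p ^ 2) * X ω ^ 2
        + (4 * c ^ 3 * ((1 - p) ^ 3 + p ^ 3)) * (X ω ^ 1 * B ω)
        + (-(4 * c ^ 3 * p ^ 3)) * X ω ^ 1
        + (c ^ 4 * ((1 - p) ^ 4 - p ^ 4)) * B ω) P :=
      A6.add (iB.const_mul (c ^ 4 * ((1 - p) ^ 4 - p ^ 4)))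
    rw [integral_congr_ae e4, integral_add A7 (integrable_const _),
      integral_add A6 (iB.const_mul _), integral_add A5 (i1.const_mul _),
      integral_add A4 ((hXiB 1 (by norm_num)).const_mul _),
      integral_add A3 (i2.const_mul _),
      integral_add A2 ((hXiB 2 (by norm_num)).const_mul _),
      integral_add A1 (i3.const_mul _),
      integral_add i4 ((hXiB 3 (by norm_num)).const_mul _),
      integral_const_mul, integral_const_mul, integral_const_mul, integral_const_mul,
      integral_const_mul, integral_const_mul, integral_const_mul, integral_const,
      hkurt, hmul 3, hmul 2, hmul 1, hX1, hvar, hEB]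
    simp only [measure_univ, probReal_univ, ENNReal.toReal_one, smul_eq_mul]
    ring
  -- put it together
  rw [hEZ, hI2, hI4]
  have hs0 : 0 ≤ c ^ 2 * p * (1 - p) :=
    mul_nonneg (mul_nonneg (sq_nonneg c) hppos.le) (by linarith)
  have hden : (0:ℝ) < (1 + c ^ 2 * p * (1 - p)) ^ 2 := by positivity
  rw [div_le_iff₀ hden]
  rcases le_total Δ (1 / κ₀) with hcase | hcase
  · -- p = Δ, c = 1
    have hpΔ : p = Δ := by rw [hp, min_eq_left hcase]
    have hc1 : c = 1 := by rw [hc, hpΔ, div_self hΔ.ne']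
    have hΔκ : Δ * κ₀ ≤ 1 := by
      rw [← hpΔ] at hcase ⊢
      calc p * κ₀ ≤ (1 / κ₀) * κ₀ := by nlinarith
        _ = 1 := by field_simp
    rw [hc1, hpΔ]
    exact kurt_aux1 κ κ₀ Δ hκ₀ hΔ hΔκ hκκ₀
  · -- p = 1/κ₀, c = Δ * κ₀
    have hpκ' : p = 1 / κ₀ := by rw [hp, min_eq_right hcase]
    have hcΔ : c = Δ * κ₀ := by
      rw [hc, hpκ']; field_simp
    have hs : c ^ 2 * p * (1 - p) = Δ ^ 2 * (κ₀ - 1) := by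
      rw [hcΔ, hpκ']; field_simp
    have hm4 : c ^ 4 * (p * (1 - p) ^ 4 + p ^ 4 * (1 - p))
        = Δ ^ 4 * (κ₀ - 1) * (κ₀ ^ 2 - 3 * κ₀ + 3) := by
      rw [hcΔ, hpκ']; field_simp; ring
    rw [hs, hm4]
    have := kurt_aux2 κ κ₀ Δ hκ₀ hκκ₀
    linarith
end
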